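/- Let E be a field and A a 2×2 matrix over E whose minimal polynomial is g(x) = x² − cx + d (i.e., A satisfies g and is not scalar). Let K = E[U]/(g(U)). Then A, viewed as a matrix over K, is conjugate by an element of GL₂(K) to a lower triangular matrix whose (1,1)-entry is the image of U in K. -/

import Mathlib

/-!
Statement 4: If `A` is a `2×2` matrix over a field `E` with minimal polynomial
`g(x) = x² − c·x + d`, and `K = E[U]/(g(U))`, then over `K` the matrix `A` is conjugate
(by an element of `GL₂(K)`) to a lower triangular matrix whose `(1,1)`-entry is `U`.
-/

open Polynomial

noncomputable section

/-- The quadratic polynomial `x² - c·x + d`. -/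
def quadPoly {E : Type*} [Field E] (c d : E) : E[X] := X ^ 2 - C c * X + C d

/-- `K = E[U]/(g(U))` where `g = x² - c·x + d`. -/
def quadExt (E : Type*) [Field E] (c d : E) : Type _ := AdjoinRoot (quadPoly c d)

instance (E : Type*) [Field E] (c d : E) : CommRing (quadExt E c d) := by
  unfold quadExt; infer_instance

instance (E : Type*) [Field E] (c d : E) : Algebra E (quadExt E c d) := by
  unfold quadExt; infer_instance

/-- The image `U` of `x` in `K = E[x]/(g)`. -/
def quadRoot (E : Type*) [Field E] (c d : E) : quadExt E c d := AdjoinRoot.root (quadPoly c d)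

private lemma row_eigen_conj {R : Type*} [CommRing R] (A' Pm Qm : Matrix (Fin 2) (Fin 2) R)
    (u : R) (hPQ : Pm * Qm = 1)
    (h0 : (Pm * A') 0 0 = u * Pm 0 0) (h1 : (Pm * A') 0 1 = u * Pm 0 1) :
    (Pm * A' * Qm) 0 0 = u ∧ (Pm * A' * Qm) 0 1 = 0 := by
  have h2 : ∀ j, (Pm * A' * Qm) 0 j = u * (Pm * Qm) 0 j := by
    intro j
    rw [Matrix.mul_apply, Fin.sum_univ_two, h0, h1, Matrix.mul_apply, Fin.sum_univ_two]
    ring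
  refine ⟨?_, ?_⟩ <;> rw [h2, hPQ] <;> simp

theorem conjugate_to_lower_triangular_with_root
    (E : Type*) [Field E] (c d : E) (A : Matrix (Fin 2) (Fin 2) E)
    (hmin : minpoly E A = quadPoly c d) :
    ∃ (P : GL (Fin 2) (quadExt E c d)),
      ∀ B : Matrix (Fin 2) (Fin 2) (quadExt E c d),
        B = (P : Matrix (Fin 2) (Fin 2) (quadExt E c d)) *
              A.map (algebraMap E (quadExt E c d)) *
              ((P⁻¹ : GL (Fin 2) (quadExt E c d)) : Matrix (Fin 2) (Fin 2) (quadExt E c d)) →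
          B 0 0 = quadRoot E c d ∧ B 0 1 = 0 := by
  classical
  set ι := algebraMap E (quadExt E c d) with hιdef
  set u := quadRoot E c d with hudef
  -- the defining relation of `u`
  have hu : u ^ 2 - ι c * u + ι d = 0 := by
    have h := AdjoinRoot.eval₂_root (quadPoly c d)
    rw [quadPoly, eval₂_add, eval₂_sub, eval₂_mul, eval₂_pow, eval₂_X, eval₂_C, eval₂_C] at h
    exact h
  -- the matrix equation satisfied by A
  have hA2 : A * A - c • A + d • (1 : Matrix (Fin 2) (Fin 2) E) = 0 := by
    have h := minpoly.aeval E A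
    rw [hmin] at h
    simp only [quadPoly, map_add, map_sub, map_mul, aeval_X, aeval_C, map_pow] at h
    rw [← h]
    simp only [sq, Algebra.algebraMap_eq_smul_one, smul_mul_assoc, one_mul]
  have h00 : A 0 0 * A 0 0 + A 0 1 * A 1 0 - c * A 0 0 + d = 0 := by
    have h := congrFun (congrFun hA2 0) 0
    simp [Matrix.mul_apply, Fin.sum_univ_two, Matrix.one_apply] at h
    linear_combination h
  have h01 : A 0 0 * A 0 1 + A 0 1 * A 1 1 - c * A 0 1 = 0 := by
    have h := congrFun (congrFun hA2 0) 1
    simp [Matrix.mul_apply, Fin.sum_univ_two, Matrix.one_apply] at h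
    linear_combination h
  have h10 : A 1 0 * A 0 0 + A 1 1 * A 1 0 - c * A 1 0 = 0 := by
    have h := congrFun (congrFun hA2 1) 0
    simp [Matrix.mul_apply, Fin.sum_univ_two, Matrix.one_apply] at h
    linear_combination h
  have h11 : A 1 0 * A 0 1 + A 1 1 * A 1 1 - c * A 1 1 + d = 0 := by
    have h := congrFun (congrFun hA2 1) 1
    simp [Matrix.mul_apply, Fin.sum_univ_two, Matrix.one_apply] at h
    linear_combination h
  -- mapped versions
  have Hmap : ∀ x : E, x = 0 → ι x = 0 := by intro x hx; rw [hx, map_zero]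
  have H00 : ι (A 0 0) * ι (A 0 0) + ι (A 0 1) * ι (A 1 0) - ι c * ι (A 0 0) + ι d = 0 := by
    have h := Hmap _ h00
    simp only [map_add, map_sub, map_mul] at h
    linear_combination h
  have H01 : ι (A 0 0) * ι (A 0 1) + ι (A 0 1) * ι (A 1 1) - ι c * ι (A 0 1) = 0 := by
    have h := Hmap _ h01
    simp only [map_add, map_sub, map_mul] at h
    linear_combination h
  have H10 : ι (A 1 0) * ι (A 0 0) + ι (A 1 1) * ι (A 1 0) - ι c * ι (A 1 0) = 0 := by
    have h := Hmap _ h10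
    simp only [map_add, map_sub, map_mul] at h
    linear_combination h
  have H11 : ι (A 1 0) * ι (A 0 1) + ι (A 1 1) * ι (A 1 1) - ι c * ι (A 1 1) + ι d = 0 := by
    have h := Hmap _ h11
    simp only [map_add, map_sub, map_mul] at h
    linear_combination h
  by_cases hb : A 0 1 = 0
  · by_cases he : A 1 0 = 0
    · -- diagonal case; first show the diagonal entries differ
      have haf : A 0 0 ≠ A 1 1 := by
        intro hEq
        have hAs : A = (A 0 0) • (1 : Matrix (Fin 2) (Fin 2) E) := by
          ext i j
          fin_cases i <;> fin_cases j <;>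
            simp [hb, he, hEq, Matrix.one_apply]
        have hdvd : minpoly E A ∣ X - C (A 0 0) := by
          apply minpoly.dvd
          rw [map_sub, aeval_X, aeval_C, Algebra.algebraMap_eq_smul_one, sub_eq_zero]
          exact hAs
        rw [hmin] at hdvd
        have hdeg := Polynomial.natDegree_le_of_dvd hdvd (X_sub_C_ne_zero _)
        rw [natDegree_X_sub_C] at hdeg
        have h2 : (quadPoly c d).natDegree = 2 := by
          unfold quadPoly; compute_degree!
        omega
      have hc : c = A 0 0 + A 1 1 := by
        have hkey : (A 0 0 - A 1 1) * (A 0 0 + A 1 1 - c) = 0 := by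
          linear_combination h00 - h11
        rcases mul_eq_zero.mp hkey with h | h
        · exact absurd (sub_eq_zero.mp h) haf
        · linear_combination -h
      have hd : d = A 0 0 * A 1 1 := by
        linear_combination h00 + A 0 0 * hc + (-(A 1 0)) * hb
      have hcK : ι c = ι (A 0 0) + ι (A 1 1) := (congrArg ι hc).trans (map_add ι _ _)
      have hdK : ι d = ι (A 0 0) * ι (A 1 1) := (congrArg ι hd).trans (map_mul ι _ _)
      have hgK' : (ι (A 0 0) - ι (A 1 1)) * ι ((A 0 0 - A 1 1)⁻¹) = 1 := by
        rw [← map_sub, ← map_mul, mul_inv_cancel₀ (sub_ne_zero.mpr haf), map_one]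
      set g := ι ((A 0 0 - A 1 1)⁻¹) with hgdef
      set Pm : Matrix (Fin 2) (Fin 2) (quadExt E c d) :=
        !![u - ι (A 1 1), u - ι (A 0 0); 1, 1] with hPm
      set Qm : Matrix (Fin 2) (Fin 2) (quadExt E c d) :=
        !![g, -((u - ι (A 0 0)) * g); -g, (u - ι (A 1 1)) * g] with hQm
      have hPQ : Pm * Qm = 1 := by
        ext i j
        fin_cases i <;> fin_cases j <;>
          simp [hPm, hQm, Matrix.mul_apply, Fin.sum_univ_two, Matrix.one_apply] <;>
          first
            | ring1
            | linear_combination hgK'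
      have hQP : Qm * Pm = 1 := by
        ext i j
        fin_cases i <;> fin_cases j <;>
          simp [hPm, hQm, Matrix.mul_apply, Fin.sum_univ_two, Matrix.one_apply] <;>
          first
            | ring1
            | linear_combination hgK'
      have heig0 : (Pm * A.map ι) 0 0 = u * Pm 0 0 := by
        simp only [hPm, Matrix.mul_apply, Fin.sum_univ_two, Matrix.map_apply,
          Matrix.cons_val_zero, Matrix.cons_val_one, Matrix.head_cons,
          Matrix.of_apply, Matrix.cons_val', Matrix.empty_val', Matrix.cons_val_fin_one,
          Matrix.head_fin_const]
        linear_combination (-1 : quadExt E c d) * hu + (-u) * hcK + hdK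
          + (u - ι (A 0 0)) * (Hmap _ he)
      have heig1 : (Pm * A.map ι) 0 1 = u * Pm 0 1 := by
        simp only [hPm, Matrix.mul_apply, Fin.sum_univ_two, Matrix.map_apply,
          Matrix.cons_val_zero, Matrix.cons_val_one, Matrix.head_cons,
          Matrix.of_apply, Matrix.cons_val', Matrix.empty_val', Matrix.cons_val_fin_one,
          Matrix.head_fin_const]
        linear_combination (-1 : quadExt E c d) * hu + (-u) * hcK + hdK
          + (u - ι (A 1 1)) * (Hmap _ hb)
      refine ⟨⟨Pm, Qm, hPQ, hQP⟩, ?_⟩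
      intro B hB
      rw [hB]
      exact row_eigen_conj (A.map ι) Pm Qm u hPQ heig0 heig1
    · -- second row gives an eigenvector
      have heinv : ι (A 1 0) * ι ((A 1 0)⁻¹) = 1 := by
        rw [← map_mul, mul_inv_cancel₀ he, map_one]
      set Pm : Matrix (Fin 2) (Fin 2) (quadExt E c d) :=
        !![ι (A 1 0), ι (A 1 1) - ι c + u; 0, 1] with hPm
      set Qm : Matrix (Fin 2) (Fin 2) (quadExt E c d) :=
        !![ι ((A 1 0)⁻¹), -((ι (A 1 1) - ι c + u) * ι ((A 1 0)⁻¹)); 0, 1] with hQm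
      have hPQ : Pm * Qm = 1 := by
        ext i j
        fin_cases i <;> fin_cases j <;>
          simp [hPm, hQm, Matrix.mul_apply, Fin.sum_univ_two, Matrix.one_apply] <;>
          first
            | ring1
            | linear_combination heinv
            | linear_combination (-(ι (A 1 1) - ι c + u)) * heinv
      have hQP : Qm * Pm = 1 := by
        ext i j
        fin_cases i <;> fin_cases j <;>
          simp [hPm, hQm, Matrix.mul_apply, Fin.sum_univ_two, Matrix.one_apply] <;>
          first
            | ring1
            | linear_combination heinv
            | linear_combination (-(ι (A 1 1) - ι c + u)) * heinv
      have heig0 : (Pm * A.map ι) 0 0 = u * Pm 0 0 := by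
        simp only [hPm, Matrix.mul_apply, Fin.sum_univ_two, Matrix.map_apply,
          Matrix.cons_val_zero, Matrix.cons_val_one, Matrix.head_cons,
          Matrix.of_apply, Matrix.cons_val', Matrix.empty_val', Matrix.cons_val_fin_one,
          Matrix.head_fin_const]
        linear_combination H10
      have heig1 : (Pm * A.map ι) 0 1 = u * Pm 0 1 := by
        simp only [hPm, Matrix.mul_apply, Fin.sum_univ_two, Matrix.map_apply,
          Matrix.cons_val_zero, Matrix.cons_val_one, Matrix.head_cons,
          Matrix.of_apply, Matrix.cons_val', Matrix.empty_val', Matrix.cons_val_fin_one,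
          Matrix.head_fin_const]
        linear_combination H11 - hu
      refine ⟨⟨Pm, Qm, hPQ, hQP⟩, ?_⟩
      intro B hB
      rw [hB]
      exact row_eigen_conj (A.map ι) Pm Qm u hPQ heig0 heig1
  · -- first row gives an eigenvector
    have hbinv : ι (A 0 1) * ι ((A 0 1)⁻¹) = 1 := by
      rw [← map_mul, mul_inv_cancel₀ hb, map_one]
    set Pm : Matrix (Fin 2) (Fin 2) (quadExt E c d) :=
      !![ι (A 0 0) - ι c + u, ι (A 0 1); 1, 0] with hPm
    set Qm : Matrix (Fin 2) (Fin 2) (quadExt E c d) :=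
      !![0, 1; ι ((A 0 1)⁻¹), -((ι (A 0 0) - ι c + u) * ι ((A 0 1)⁻¹))] with hQm
    have hPQ : Pm * Qm = 1 := by
      ext i j
      fin_cases i <;> fin_cases j <;>
        simp [hPm, hQm, Matrix.mul_apply, Fin.sum_univ_two, Matrix.one_apply] <;>
        first
          | ring1
          | linear_combination hbinv
          | linear_combination (-(ι (A 0 0) - ι c + u)) * hbinv
    have hQP : Qm * Pm = 1 := by
      ext i j
      fin_cases i <;> fin_cases j <;>
        simp [hPm, hQm, Matrix.mul_apply, Fin.sum_univ_two, Matrix.one_apply] <;>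
        first
          | ring1
          | linear_combination hbinv
          | linear_combination (-(ι (A 0 0) - ι c + u)) * hbinv
    have heig0 : (Pm * A.map ι) 0 0 = u * Pm 0 0 := by
      simp only [hPm, Matrix.mul_apply, Fin.sum_univ_two, Matrix.map_apply,
        Matrix.cons_val_zero, Matrix.cons_val_one, Matrix.head_cons,
        Matrix.of_apply, Matrix.cons_val', Matrix.empty_val', Matrix.cons_val_fin_one,
        Matrix.head_fin_const]
      linear_combination H00 - hu
    have heig1 : (Pm * A.map ι) 0 1 = u * Pm 0 1 := by
      simp only [hPm, Matrix.mul_apply, Fin.sum_univ_two, Matrix.map_apply,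
        Matrix.cons_val_zero, Matrix.cons_val_one, Matrix.head_cons,
        Matrix.of_apply, Matrix.cons_val', Matrix.empty_val', Matrix.cons_val_fin_one,
        Matrix.head_fin_const]
      linear_combination H01
    refine ⟨⟨Pm, Qm, hPQ, hQP⟩, ?_⟩
    intro B hB
    rw [hB]
    exact row_eigen_conj (A.map ι) Pm Qm u hPQ heig0 heig1

end
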